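/- Let p be a probability vector on n ≥ 2 symbols, let j be an index, and let λ be a positive integer. Define lengths l by l_j = λ and l_i = ⌈ −log₂( p_i·(1 − 2^(−λ))/(1 − p_j) ) ⌉ for i ≠ j. Then l satisfies the Kraft inequality: ∑_i 2^(−l_i) ≤ 1. -/

import Mathlib

open Real Finset

theorem stmt_7 (n : ℕ) (hn : 2 ≤ n)
    (p : Fin n → ℝ) (hp : ∀ i, 0 < p i) (hpsum : ∑ i, p i = 1)
    (j : Fin n) (lam : ℕ) (hlam : 1 ≤ lam)
    (l : Fin n → ℕ)
    (hl : ∀ i, l i = if i = j then lam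
      else ⌈-Real.logb 2 (p i * (1 - (2 : ℝ) ^ (-(lam : ℝ))) / (1 - p j))⌉₊) :
    ∑ i, (2 : ℝ) ^ (-(l i : ℝ)) ≤ 1 := by
  have h2 : (1:ℝ) < 2 := one_lt_two
  -- 2^(-λ) < 1
  have hlam1 : (2:ℝ) ^ (-(lam : ℝ)) < 1 := by
    have : (-(lam:ℝ)) < 0 := by
      simp only [neg_neg, Left.neg_neg_iff]
      exact_mod_cast Nat.lt_of_lt_of_le Nat.zero_lt_one hlam
    calc (2:ℝ) ^ (-(lam : ℝ)) < (2:ℝ) ^ (0:ℝ) :=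
          Real.rpow_lt_rpow_of_exponent_lt h2 this
      _ = 1 := Real.rpow_zero 2
  have hc : (0:ℝ) < 1 - (2:ℝ) ^ (-(lam : ℝ)) := by linarith
  -- p j < 1
  obtain ⟨k, hk⟩ : ∃ k : Fin n, k ≠ j := by
    obtain ⟨k, hk⟩ := Fintype.exists_ne_of_one_lt_card (by simp; omega) j
    exact ⟨k, hk⟩
  have hsum_erase : ∑ i ∈ univ.erase j, p i = 1 - p j := by
    have := Finset.add_sum_erase univ p (mem_univ j)
    linarith [this.trans hpsum]
  have herase_pos : (0:ℝ) < ∑ i ∈ univ.erase j, p i :=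
    Finset.sum_pos (fun i _ => hp i) ⟨k, by simp [hk]⟩
  have hpj : p j < 1 := by linarith [hsum_erase ▸ herase_pos]
  have hpj' : (0:ℝ) < 1 - p j := by linarith
  -- key bound for i ≠ j
  have key : ∀ i ∈ univ.erase j,
      (2:ℝ) ^ (-(l i : ℝ)) ≤ p i * (1 - (2:ℝ) ^ (-(lam : ℝ))) / (1 - p j) := by
    intro i hi
    have hij : i ≠ j := (Finset.mem_erase.mp hi).1
    set x := p i * (1 - (2:ℝ) ^ (-(lam : ℝ))) / (1 - p j) with hx
    have hxpos : 0 < x := div_pos (mul_pos (hp i) hc) hpj'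
    have hceil : -Real.logb 2 x ≤ (l i : ℝ) := by
      rw [hl i, if_neg hij]
      exact Nat.le_ceil _
    have : -(l i : ℝ) ≤ Real.logb 2 x := by linarith
    calc (2:ℝ) ^ (-(l i : ℝ)) ≤ (2:ℝ) ^ (Real.logb 2 x) :=
          Real.rpow_le_rpow_of_exponent_le (le_of_lt h2) this
      _ = x := Real.rpow_logb (by norm_num) (by norm_num) hxpos
  have hsplit : ∑ i, (2:ℝ) ^ (-(l i : ℝ))
      = (2:ℝ) ^ (-(l j : ℝ)) + ∑ i ∈ univ.erase j, (2:ℝ) ^ (-(l i : ℝ)) :=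
    (Finset.add_sum_erase univ _ (mem_univ j)).symm
  have hbound : ∑ i ∈ univ.erase j, (2:ℝ) ^ (-(l i : ℝ))
      ≤ 1 - (2:ℝ) ^ (-(lam : ℝ)) := by
    calc ∑ i ∈ univ.erase j, (2:ℝ) ^ (-(l i : ℝ))
        ≤ ∑ i ∈ univ.erase j, p i * (1 - (2:ℝ) ^ (-(lam : ℝ))) / (1 - p j) :=
          Finset.sum_le_sum key
      _ = (∑ i ∈ univ.erase j, p i) * (1 - (2:ℝ) ^ (-(lam : ℝ))) / (1 - p j) := by
          rw [← Finset.sum_div, ← Finset.sum_mul]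
      _ = 1 - (2:ℝ) ^ (-(lam : ℝ)) := by
          rw [hsum_erase]; field_simp
  have hlj : (2:ℝ) ^ (-(l j : ℝ)) = (2:ℝ) ^ (-(lam : ℝ)) := by
    rw [hl j, if_pos rfl]
  rw [hsplit, hlj]
  linarith
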